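/- Let C be a binary tangled clutter over ground set V. If {e,f} is a minimum cover of C, then every member of C contains exactly one of e and f. Consequently, if {e,f} and {e,g} are both minimum covers, then f and g are duplicated elements (they belong to exactly the same members). -/
import Mathlib


/-- `B` is a cover of the clutter `C`: it intersects every member. -/
def IsCover {V : Type*} [DecidableEq V] (C : Finset (Finset V)) (B : Finset V) : Prop :=
  ∀ A ∈ C, (A ∩ B).Nonempty

/-- Let `C` be a binary tangled clutter (covering number two, every element in a
cover of size two, and every member meets every minimal cover oddly). If `{e,f}` is a minimum
cover, then every member contains exactly one of `e, f`; consequently if `{e,f}` and `{e,g}`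
are both minimum covers, then `f` and `g` are duplicated elements. -/
theorem stmt_16 {V : Type*} [Fintype V] [DecidableEq V] (C : Finset (Finset V))
    (hclutter : ∀ A ∈ C, ∀ B ∈ C, A ⊆ B → A = B)
    (hbinary : ∀ A ∈ C, ∀ B : Finset V, IsCover C B →
      (∀ B' ⊆ B, IsCover C B' → B' = B) → Odd ((A ∩ B).card))
    (htau : (∀ B : Finset V, IsCover C B → 2 ≤ B.card) ∧
      ∃ B : Finset V, IsCover C B ∧ B.card = 2)
    (htangled : ∀ v : V, ∃ B : Finset V, IsCover C B ∧ B.card = 2 ∧ v ∈ B)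
    (e f g : V) (hef : e ≠ f) (heg : e ≠ g)
    (hcov_ef : IsCover C {e, f}) (hcov_eg : IsCover C {e, g}) :
    (∀ A ∈ C, (e ∈ A ↔ f ∉ A)) ∧ (∀ A ∈ C, (f ∈ A ↔ g ∈ A)) := by
  have key : ∀ x y : V, x ≠ y → IsCover C {x, y} → ∀ A ∈ C, (x ∈ A ↔ y ∉ A) := by
    intro x y hxy hcov A hA
    have hc : ({x, y} : Finset V).card = 2 := by
      rw [Finset.card_insert_of_notMem (by simp [hxy]), Finset.card_singleton]
    have hodd := hbinary A hA {x, y} hcov ?_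
    · by_cases hx : x ∈ A <;> by_cases hy : y ∈ A
      · exfalso
        have : A ∩ {x, y} = {x, y} := Finset.inter_eq_right.mpr (by
          intro z hz; simp at hz; rcases hz with rfl | rfl <;> assumption)
        rw [this, hc] at hodd
        exact (Nat.not_odd_iff_even.mpr (by decide)) hodd
      · simp [hx, hy]
      · simp [hx, hy]
      · exfalso
        have : A ∩ {x, y} = ∅ := by
          apply Finset.eq_empty_iff_forall_notMem.mpr
          intro z hz
          simp at hz
          rcases hz.2 with rfl | rfl
          · exact hx hz.1
          · exact hy hz.1
        rw [this, Finset.card_empty] at hodd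
        exact (Nat.not_odd_iff_even.mpr (by decide)) hodd
    · intro B' hB' hcovB'
      exact Finset.eq_of_subset_of_card_le hB' (by rw [hc]; exact htau.1 B' hcovB')
  refine ⟨fun A hA => key e f hef hcov_ef A hA, fun A hA => ?_⟩
  have h1 := key e f hef hcov_ef A hA
  have h2 := key e g heg hcov_eg A hA
  tauto
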